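/- Let d ≥ 1 and let p : Fin d × Fin d → ℝ be a joint probability mass function (p(i,j) ≥ 0, Σ p = 1) with second marginal p_Y(j) := Σ_i p(i,j), and error probability p_e := Σ_{(i,j), i ≠ j} p(i,j). Then the conditional Shannon entropy satisfies H(p) − H(p_Y) ≤ h(p_e) + p_e · Real.log (d − 1), where H(q) := Σ Real.negMulLog (q ·) denotes Shannon entropy and h(δ) := negMulLog δ + negMulLog (1 − δ) is the binary entropy. -/
import Mathlib

open Finset Real

theorem fano_inequality
    (d : ℕ) (hd : 1 ≤ d) (p : Fin d × Fin d → ℝ)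
    (hp0 : ∀ x, 0 ≤ p x) (hp1 : ∑ x, p x = 1)
    (pe : ℝ)
    (hpe : pe = ∑ x ∈ Finset.univ.filter (fun x : Fin d × Fin d => x.1 ≠ x.2), p x) :
    (∑ x, Real.negMulLog (p x)) - (∑ j, Real.negMulLog (∑ i, p (i, j)))
      ≤ (Real.negMulLog pe + Real.negMulLog (1 - pe)) + pe * Real.log ((d : ℝ) - 1) := by
  classical
  set pY : Fin d → ℝ := fun j => ∑ i, p (i, j) with hpYdef
  set c : ℝ := pe / ((d : ℝ) - 1) with hcdef
  set r : Fin d × Fin d → ℝ := fun x => if x.1 = x.2 then 1 - pe else c with hrdef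
  have hpe0 : 0 ≤ pe := by
    rw [hpe]; exact Finset.sum_nonneg fun x _ => hp0 x
  have hdiag : ∑ x ∈ Finset.univ.filter (fun x : Fin d × Fin d => x.1 = x.2), p x = 1 - pe := by
    have h := Finset.sum_filter_add_sum_filter_not Finset.univ
      (fun x : Fin d × Fin d => x.1 = x.2) p
    rw [hp1] at h
    have : ∑ x ∈ Finset.univ.filter (fun x : Fin d × Fin d => ¬ x.1 = x.2), p x = pe := by
      rw [hpe]
    linarith
  have hpe1 : pe ≤ 1 := by
    have : 0 ≤ 1 - pe := hdiag ▸ Finset.sum_nonneg fun x _ => hp0 x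
    linarith
  have hdpos : ∀ x : Fin d × Fin d, x.1 ≠ x.2 → (1:ℝ) < (d:ℝ) := by
    intro x hx
    have : Nontrivial (Fin d) := ⟨⟨x.1, x.2, hx⟩⟩
    have h1 : 1 < d := by
      have := Fintype.one_lt_card_iff_nontrivial.mpr this
      simpa using this
    exact_mod_cast h1
  have hd0 : (0:ℝ) ≤ (d:ℝ) - 1 := by
    have : (1:ℝ) ≤ (d:ℝ) := by exact_mod_cast hd
    linarith
  have hc0 : 0 ≤ c := div_nonneg hpe0 hd0
  have hpY0 : ∀ j, 0 ≤ pY j := fun j => Finset.sum_nonneg fun i _ => hp0 (i, j)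
  have hple : ∀ x : Fin d × Fin d, p x ≤ pY x.2 := by
    intro x
    exact Finset.single_le_sum (fun i _ => hp0 (i, x.2)) (Finset.mem_univ x.1)
  have hr0 : ∀ x, 0 ≤ r x := by
    intro x
    simp only [hrdef]
    split_ifs
    · linarith
    · exact hc0
  -- positivity of r on support of p
  have hrpos : ∀ x : Fin d × Fin d, 0 < p x → 0 < r x := by
    intro x hx
    simp only [hrdef]
    split_ifs with h
    · -- diagonal: p x > 0 forces pe < 1
      have hxmem : x ∈ Finset.univ.filter (fun x : Fin d × Fin d => x.1 = x.2) := by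
        simp [h]
      have := Finset.single_le_sum (f := p) (fun y _ => hp0 y) hxmem
      rw [hdiag] at this
      linarith
    · have hxmem : x ∈ Finset.univ.filter (fun x : Fin d × Fin d => x.1 ≠ x.2) := by
        simp [h]
      have hle := Finset.single_le_sum (f := p) (fun y _ => hp0 y) hxmem
      rw [← hpe] at hle
      have hd1 : (1:ℝ) < (d:ℝ) := hdpos x h
      exact div_pos (lt_of_lt_of_le hx hle) (by linarith)
  have hpYsum : ∑ j, pY j = 1 := by
    rw [← hp1, Fintype.sum_prod_type]
    exact Finset.sum_comm.symm
  -- sum of q is at most 1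
  have hrsum : ∀ j : Fin d, ∑ i : Fin d, r (i, j) ≤ 1 := by
    intro j
    have heq : ∀ i : Fin d, r (i, j) = (if i = j then (1 - pe) - c else 0) + c := by
      intro i; simp only [hrdef]; split_ifs <;> ring
    have : ∑ i : Fin d, r (i, j) = ((1 - pe) - c) + (d : ℝ) * c := by
      rw [Finset.sum_congr rfl fun i _ => heq i, Finset.sum_add_distrib,
        Finset.sum_ite_eq' Finset.univ j, Finset.sum_const]
      simp [Finset.card_univ, mul_comm]
    rw [this]
    have hdc : ((d:ℝ) - 1) * c ≤ pe := by
      rcases eq_or_ne ((d:ℝ) - 1) 0 with h | h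
      · simp [h, hpe0]
      · rw [hcdef, mul_comm, div_mul_cancel₀ _ h]
    nlinarith
  have hqsum : ∑ x : Fin d × Fin d, pY x.2 * r x ≤ 1 := by
    have h1 : ∑ x : Fin d × Fin d, pY x.2 * r x = ∑ j, pY j * ∑ i, r (i, j) := by
      rw [Fintype.sum_prod_type, Finset.sum_comm]
      exact Finset.sum_congr rfl fun j _ => by rw [Finset.mul_sum]
    rw [h1, ← hpYsum]
    apply Finset.sum_le_sum
    intro j _
    calc pY j * ∑ i, r (i, j) ≤ pY j * 1 := by
          exact mul_le_mul_of_nonneg_left (hrsum j) (hpY0 j)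
      _ = pY j := mul_one _
  -- Gibbs inequality
  have gibbs : ∑ x, p x * Real.log (pY x.2 * r x) ≤ ∑ x, p x * Real.log (p x) := by
    have key : ∀ x ∈ Finset.univ (α := Fin d × Fin d),
        p x * Real.log (pY x.2 * r x) - p x * Real.log (p x) ≤ pY x.2 * r x - p x := by
      intro x _
      rcases eq_or_lt_of_le (hp0 x) with h | h
      · rw [← h]; simp
        exact mul_nonneg (hpY0 x.2) (hr0 x)
      · have hq : 0 < pY x.2 * r x :=
          mul_pos (lt_of_lt_of_le h (hple x)) (hrpos x h)
        have hlog : Real.log (pY x.2 * r x) - Real.log (p x)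
            = Real.log ((pY x.2 * r x) / p x) := (Real.log_div hq.ne' h.ne').symm
        have h2 : Real.log ((pY x.2 * r x) / p x) ≤ (pY x.2 * r x) / p x - 1 :=
          Real.log_le_sub_one_of_pos (div_pos hq h)
        calc p x * Real.log (pY x.2 * r x) - p x * Real.log (p x)
            = p x * ((Real.log (pY x.2 * r x) - Real.log (p x))) := by ring
          _ = p x * Real.log ((pY x.2 * r x) / p x) := by rw [hlog]
          _ ≤ p x * ((pY x.2 * r x) / p x - 1) :=
              mul_le_mul_of_nonneg_left h2 h.le
          _ = pY x.2 * r x - p x := by field_simp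
    have := Finset.sum_le_sum key
    rw [Finset.sum_sub_distrib, Finset.sum_sub_distrib, hp1] at this
    linarith [hqsum]
  -- compute ∑ p x * log (q x)
  have hlogq : ∑ x, p x * Real.log (pY x.2 * r x)
      = (∑ j, pY j * Real.log (pY j)) + (1 - pe) * Real.log (1 - pe)
        + (pe * Real.log pe - pe * Real.log ((d:ℝ) - 1)) := by
    have hsplit : ∀ x : Fin d × Fin d,
        p x * Real.log (pY x.2 * r x) = p x * Real.log (pY x.2) + p x * Real.log (r x) := by
      intro x
      rcases eq_or_lt_of_le (hp0 x) with h | h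
      · rw [← h]; ring
      · have h1 : 0 < pY x.2 := lt_of_lt_of_le h (hple x)
        have h2 : 0 < r x := hrpos x h
        rw [Real.log_mul h1.ne' h2.ne']; ring
    rw [Finset.sum_congr rfl fun x _ => hsplit x, Finset.sum_add_distrib]
    have hb : ∑ x : Fin d × Fin d, p x * Real.log (pY x.2) = ∑ j, pY j * Real.log (pY j) := by
      rw [Fintype.sum_prod_type, Finset.sum_comm]
      refine Finset.sum_congr rfl fun j _ => ?_
      have hbt : ∀ i : Fin d, p (i, j) * Real.log (pY (i, j).2) = p (i, j) * Real.log (pY j) :=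
        fun i => rfl
      rw [Finset.sum_congr rfl fun i _ => hbt i, ← Finset.sum_mul]
    have hcsum : ∑ x : Fin d × Fin d, p x * Real.log (r x)
        = (1 - pe) * Real.log (1 - pe) + pe * Real.log c := by
      rw [← Finset.sum_filter_add_sum_filter_not Finset.univ
        (fun x : Fin d × Fin d => x.1 = x.2)]
      congr 1
      · have h1 : ∀ x ∈ Finset.univ.filter (fun x : Fin d × Fin d => x.1 = x.2),
            p x * Real.log (r x) = p x * Real.log (1 - pe) := by
          intro x hx
          simp only [Finset.mem_filter] at hx
          simp [hrdef, hx.2]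
        rw [Finset.sum_congr rfl h1, ← Finset.sum_mul, hdiag]
      · have h1 : ∀ x ∈ Finset.univ.filter (fun x : Fin d × Fin d => ¬ x.1 = x.2),
            p x * Real.log (r x) = p x * Real.log c := by
          intro x hx
          simp only [Finset.mem_filter] at hx
          simp [hrdef, hx.2]
        have hpe' : ∑ x ∈ Finset.univ.filter (fun x : Fin d × Fin d => ¬ x.1 = x.2), p x = pe := by
          rw [hpe]
        rw [Finset.sum_congr rfl h1, ← Finset.sum_mul, hpe']
    have hdd : pe * Real.log c = pe * Real.log pe - pe * Real.log ((d:ℝ) - 1) := by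
      rcases eq_or_lt_of_le hpe0 with h | h
      · rw [← h]; ring
      · have hne : (Finset.univ.filter (fun x : Fin d × Fin d => x.1 ≠ x.2)).Nonempty := by
          by_contra hcon
          rw [Finset.not_nonempty_iff_eq_empty] at hcon
          rw [hpe, hcon, Finset.sum_empty] at h
          exact lt_irrefl _ h
        obtain ⟨x, hx⟩ := hne
        simp only [Finset.mem_filter, Finset.mem_univ, true_and] at hx
        have hd1 : (1:ℝ) < (d:ℝ) := hdpos x hx
        rw [hcdef, Real.log_div h.ne' (by linarith)]
        ring
    rw [hb, hcsum, hdd]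
    ring
  -- assemble
  have hgoal : ∀ j : Fin d, (∑ i, p (i, j)) = pY j := fun j => rfl
  simp only [hgoal, Real.negMulLog, neg_mul, Finset.sum_neg_distrib]
  linarith [gibbs, hlogq]
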